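/- arXiv:1705.02065 — 11 statements merged into one kernel-verified Lean document; each statement's English description precedes it below -/
import Mathlib

section
/- For a permutation w of {1,...,n}, the number of 132-patterns equals the sum over all cells (i,j) of the Rothe diagram of w of the rank function r_w(i,j). That is, #{(i,j,k) : i<j<k, w(i)<w(k)<w(j)} = Σ_{(i,j)∈D(w)} r_w(i,j). -/
open Finset

/-- The Rothe diagram of a permutation (0-based coordinates). -/
def Rothe {n : ℕ} (w : Equiv.Perm (Fin n)) : Finset (Fin n × Fin n) :=
  Finset.univ.filter (fun p => p.2 < w p.1 ∧ p.1 < w⁻¹ p.2)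

/-- The rank function r_w(i,j) = #{k : k ≤ i and w(k) ≤ j}. -/
def rk {n : ℕ} (w : Equiv.Perm (Fin n)) (i j : Fin n) : ℕ :=
  (Finset.univ.filter (fun k => k ≤ i ∧ w k ≤ j)).card

/-- m_i(w) = #{j : j > i and w(j) < w(i)}. -/
def mrow {n : ℕ} (w : Equiv.Perm (Fin n)) (i : Fin n) : ℕ :=
  (Finset.univ.filter (fun j => i < j ∧ w j < w i)).card

/-- The set of 132-patterns of w. -/
def P132 {n : ℕ} (w : Equiv.Perm (Fin n)) : Finset (Fin n × Fin n × Fin n) :=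
  Finset.univ.filter
    (fun t => t.1 < t.2.1 ∧ t.2.1 < t.2.2 ∧ w t.1 < w t.2.2 ∧ w t.2.2 < w t.2.1)

/-- The number of 132-patterns of w equals the sum of the rank function
over the cells of the Rothe diagram. -/
theorem stmt0 {n : ℕ} (w : Equiv.Perm (Fin n)) :
    (P132 w).card = ∑ p ∈ Rothe w, rk w p.1 p.2 := by
  have hmap : ∀ t ∈ P132 w, (t.2.1, w t.2.2) ∈ Rothe w := by
    intro t ht
    simp only [P132, Finset.mem_filter, Finset.mem_univ, true_and] at ht
    simp only [Rothe, Finset.mem_filter, Finset.mem_univ, true_and]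
    refine ⟨ht.2.2.2, ?_⟩
    rw [Equiv.Perm.inv_def, Equiv.symm_apply_apply]
    exact ht.2.1
  rw [Finset.card_eq_sum_card_fiberwise hmap]
  refine Finset.sum_congr rfl ?_
  intro p hp
  simp only [Rothe, Finset.mem_filter, Finset.mem_univ, true_and] at hp
  have hrk : rk w p.1 p.2 =
      (Finset.univ.filter (fun a => a < p.1 ∧ w a < p.2)).card := by
    unfold rk
    congr 1
    apply Finset.filter_congr
    intro a _
    constructor
    · rintro ⟨h1, h2⟩
      refine ⟨lt_of_le_of_ne h1 ?_, lt_of_le_of_ne h2 ?_⟩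
      · rintro rfl; exact absurd hp.1 (not_lt.mpr h2)
      · intro he
        have ha : a = w⁻¹ p.2 := by rw [← he, Equiv.Perm.inv_def, Equiv.symm_apply_apply]
        rw [ha] at h1
        exact absurd hp.2 (not_lt.mpr h1)
    · rintro ⟨h1, h2⟩; exact ⟨h1.le, h2.le⟩
  rw [hrk]
  symm
  apply Finset.card_bij' (fun a _ => (a, p.1, w⁻¹ p.2)) (fun t _ => t.1)
  · intro a ha
    simp only [Finset.mem_filter, Finset.mem_univ, true_and] at ha
    simp only [P132, Finset.mem_filter, Finset.mem_univ, true_and,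
      Equiv.Perm.inv_def, Equiv.apply_symm_apply, Prod.mk.injEq, and_true, and_self]
    exact ⟨ha.1, hp.2, ha.2, hp.1⟩
  · intro t ht
    rw [Finset.mem_filter] at ht
    obtain ⟨htP, hteq⟩ := ht
    simp only [P132, Finset.mem_filter, Finset.mem_univ, true_and] at htP
    have h5 : t.2.1 = p.1 := by rw [← hteq]
    have h6 : w t.2.2 = p.2 := by rw [← hteq]
    simp only [Finset.mem_filter, Finset.mem_univ, true_and]
    exact ⟨h5 ▸ htP.1, h6 ▸ htP.2.2.1⟩
  · intro a _; rfl
  · intro t ht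
    rw [Finset.mem_filter] at ht
    obtain ⟨htP, hteq⟩ := ht
    have h5 : t.2.1 = p.1 := by rw [← hteq]
    have h6 : w t.2.2 = p.2 := by rw [← hteq]
    have h7 : w⁻¹ p.2 = t.2.2 := by rw [← h6, Equiv.Perm.inv_def, Equiv.symm_apply_apply]
    rw [← h5, h7]
end

section
/- For any permutation w ∈ S_n, the map (i,j) ↦ (i, j − r_w(i,j)) is a bijection from the Rothe diagram D(w) onto the bottom pipe dream B_w := {(i,j) : 1 ≤ j ≤ m_i(w)}, where m_i(w) = #{j : j > i and w(j) < w(i)}. -/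
open Finset

def Srow {n : ℕ} (w : Equiv.Perm (Fin n)) (i : Fin n) : Finset (Fin n) :=
  Finset.univ.filter (fun j => j < w i ∧ i < w⁻¹ j)

lemma mem_Rothe_iff {n : ℕ} (w : Equiv.Perm (Fin n)) (p : Fin n × Fin n) :
    p ∈ Rothe w ↔ p.2 ∈ Srow w p.1 := by
  simp [Rothe, Srow]

lemma Srow_card {n : ℕ} (w : Equiv.Perm (Fin n)) (i : Fin n) :
    (Srow w i).card = mrow w i := by
  unfold Srow mrow
  apply Finset.card_bij (fun j _ => w⁻¹ j)
  · intro j hj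
    simp only [mem_filter, mem_univ, true_and] at hj ⊢
    exact ⟨hj.2, by simpa using hj.1⟩
  · intro a ha b hb h
    exact (Equiv.injective _ h)
  · intro j' hj'
    simp only [mem_filter, mem_univ, true_and] at hj'
    exact ⟨w j', by simpa using ⟨hj'.2, hj'.1⟩, by simp⟩

lemma value_eq {n : ℕ} (w : Equiv.Perm (Fin n)) (i j : Fin n) (hj : j ∈ Srow w i) :
    (j : ℕ) - rk w i j = ((Srow w i).filter (fun v => v < j)).card := by
  simp only [Srow, mem_filter, mem_univ, true_and] at hj
  have h1 : rk w i j
      = (Finset.univ.filter (fun v : Fin n => v < j ∧ w⁻¹ v ≤ i)).card := by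
    unfold rk
    apply Finset.card_bij (fun k _ => w k)
    · intro k hk
      simp only [mem_filter, mem_univ, true_and] at hk ⊢
      refine ⟨lt_of_le_of_ne hk.2 ?_, by simpa using hk.1⟩
      intro h; apply absurd hj.2
      simp [← h, not_lt, hk.1]
    · intro a _ b _ h; exact Equiv.injective _ h
    · intro v hv
      simp only [mem_filter, mem_univ, true_and] at hv
      exact ⟨w⁻¹ v, by simpa using ⟨hv.2, hv.1.le⟩, by simp⟩
  have h2 : (Finset.univ.filter (fun v : Fin n => v < j ∧ i < w⁻¹ v))
      = (Srow w i).filter (fun v => v < j) := by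
    ext v
    simp only [Srow, mem_filter, mem_univ, true_and]
    constructor
    · rintro ⟨h1, h2⟩; exact ⟨⟨h1.trans hj.1, h2⟩, h1⟩
    · rintro ⟨⟨_, h2⟩, h3⟩; exact ⟨h3, h2⟩
  have h3 : (Finset.univ.filter (fun v : Fin n => v < j ∧ w⁻¹ v ≤ i)).card
      + (Finset.univ.filter (fun v : Fin n => v < j ∧ i < w⁻¹ v)).card = (j : ℕ) := by
    have h4 : (Finset.univ.filter (fun v : Fin n => v < j)).card = (j : ℕ) := by
      have : Finset.univ.filter (fun v : Fin n => v < j) = Finset.Iio j := by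
        ext v; simp
      rw [this, Fin.card_Iio]
    rw [← h4]
    have h5 := Finset.card_filter_add_card_filter_not
      (s := Finset.univ.filter (fun v : Fin n => v < j)) (p := fun v => w⁻¹ v ≤ i)
    rw [Finset.filter_filter, Finset.filter_filter] at h5
    simp only [not_le] at h5
    rw [← h5]
  have h2c := congrArg Finset.card h2
  omega

/-- The map (i,j) ↦ (i, j − r_w(i,j)) is a bijection from the Rothe diagram
onto the bottom pipe dream B_w = {(i,j) : j < m_i(w)} (0-based columns). -/
theorem stmt3 {n : ℕ} (w : Equiv.Perm (Fin n)) :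
    Set.BijOn (fun p : Fin n × Fin n => ((p.1 : ℕ), (p.2 : ℕ) - rk w p.1 p.2))
      (↑(Rothe w))
      {q : ℕ × ℕ | ∃ i : Fin n, q.1 = (i : ℕ) ∧ q.2 < mrow w i} := by
  have gmono : ∀ (i : Fin n) (a b : Fin n), a ∈ Srow w i → b ∈ Srow w i → a < b →
      ((Srow w i).filter (fun v => v < a)).card < ((Srow w i).filter (fun v => v < b)).card := by
    intro i a b ha hb hab
    apply Finset.card_lt_card
    constructor
    · intro x hx
      simp only [Finset.mem_filter] at hx ⊢
      exact ⟨hx.1, hx.2.trans hab⟩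
    · intro hsub
      have : a ∈ (Srow w i).filter (fun v => v < b) := Finset.mem_filter.2 ⟨ha, hab⟩
      have := hsub this
      simp at this
  refine ⟨?_, ?_, ?_⟩
  · intro p hp
    rw [Finset.mem_coe, mem_Rothe_iff] at hp
    refine ⟨p.1, rfl, ?_⟩
    show (p.2 : ℕ) - rk w p.1 p.2 < mrow w p.1
    rw [value_eq w p.1 p.2 hp, ← Srow_card]
    apply Finset.card_lt_card
    refine ⟨Finset.filter_subset _ _, fun hsub => ?_⟩
    have := hsub hp
    simp at this
  · intro p hp q hq heq
    rw [Finset.mem_coe, mem_Rothe_iff] at hp hq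
    have h1 : p.1 = q.1 := Fin.val_injective (congrArg Prod.fst heq)
    have h2 : (p.2 : ℕ) - rk w p.1 p.2 = (q.2 : ℕ) - rk w q.1 q.2 := congrArg Prod.snd heq
    rw [value_eq w p.1 p.2 hp, value_eq w q.1 q.2 hq, ← h1] at h2
    rw [← h1] at hq
    have h3 : p.2 = q.2 := by
      rcases lt_trichotomy p.2 q.2 with h | h | h
      · exact absurd h2 (gmono p.1 p.2 q.2 hp hq h).ne
      · exact h
      · exact absurd h2.symm (gmono p.1 q.2 p.2 hq hp h).ne
    exact Prod.ext h1 h3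
  · rintro ⟨a, k⟩ ⟨i, rfl, hk⟩
    rw [← Srow_card] at hk
    -- image of Srow under g equals range (card)
    set g : Fin n → ℕ := fun j => ((Srow w i).filter (fun v => v < j)).card with hg
    have hinj : Set.InjOn g (Srow w i) := by
      intro a ha b hb heq
      rcases lt_trichotomy a b with h | h | h
      · exact absurd heq (gmono i a b ha hb h).ne
      · exact h
      · exact absurd heq.symm (gmono i b a hb ha h).ne
    have hcard : ((Srow w i).image g).card = (Srow w i).card :=
      Finset.card_image_of_injOn hinj
    have hsub : (Srow w i).image g ⊆ Finset.range (Srow w i).card := by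
      intro x hx
      rw [Finset.mem_image] at hx
      obtain ⟨j, hj, rfl⟩ := hx
      rw [Finset.mem_range]
      apply Finset.card_lt_card
      refine ⟨Finset.filter_subset _ _, fun hsub2 => ?_⟩
      have := hsub2 hj
      simp at this
    have heq : (Srow w i).image g = Finset.range (Srow w i).card :=
      Finset.eq_of_subset_of_card_le hsub (by rw [hcard, Finset.card_range])
    have hkmem : k ∈ (Srow w i).image g := by rw [heq, Finset.mem_range]; exact hk
    rw [Finset.mem_image] at hkmem
    obtain ⟨j, hj, hjk⟩ := hkmem
    refine ⟨(i, j), ?_, ?_⟩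
    · rw [Finset.mem_coe, mem_Rothe_iff]; exact hj
    · show ((i : ℕ), (j : ℕ) - rk w i j) = ((i : ℕ), k)
      rw [Prod.mk.injEq]
      exact ⟨rfl, by rw [value_eq w i j hj]; exact hjk⟩
end

section
/- For any permutation w ∈ S_n, the map (i,j) ↦ (i − r_w(i,j), j) is a bijection from the Rothe diagram D(w) onto the top pipe dream T_w, defined as the transpose of the bottom pipe dream of w⁻¹: T_w := {(i,j) : (j,i) ∈ B_{w⁻¹}}. -/
open Finset

/-- column j of the Rothe diagram -/
def col {n : ℕ} (w : Equiv.Perm (Fin n)) (j : Fin n) : Finset (Fin n) :=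
  Finset.univ.filter (fun i => j < w i ∧ i < w⁻¹ j)

lemma col_card {n : ℕ} (w : Equiv.Perm (Fin n)) (j : Fin n) :
    (col w j).card = mrow w⁻¹ j := by
  unfold col mrow
  apply Finset.card_bij' (fun i _ => w i) (fun k _ => w⁻¹ k)
  · intro i hi
    simp only [mem_filter, mem_univ, true_and] at hi ⊢
    simpa using hi
  · intro k hk
    simp only [mem_filter, mem_univ, true_and] at hk ⊢
    simpa using hk
  · intro i _; simp
  · intro k _; simp

lemma val_eq {n : ℕ} (w : Equiv.Perm (Fin n)) (i j : Fin n)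
    (hij : j < w i) (hji : i < w⁻¹ j) :
    (i : ℕ) - rk w i j = ((col w j).filter (· < i)).card := by
  have hsplit : rk w i j + (Finset.univ.filter (fun k : Fin n => k ≤ i ∧ ¬ w k ≤ j)).card
      = (Finset.univ.filter (fun k : Fin n => k ≤ i)).card := by
    unfold rk
    rw [← Finset.filter_filter, ← Finset.filter_filter]
    exact Finset.card_filter_add_card_filter_not (fun k => w k ≤ j)
  have hIic : (Finset.univ.filter (fun k : Fin n => k ≤ i)).card = (i : ℕ) + 1 := by
    have : Finset.univ.filter (fun k : Fin n => k ≤ i) = Finset.Iic i := by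
      ext k; simp
    rw [this, Fin.card_Iic]
  have hA : Finset.univ.filter (fun k : Fin n => k ≤ i ∧ ¬ w k ≤ j)
      = insert i ((col w j).filter (· < i)) := by
    ext k
    simp only [mem_filter, mem_univ, true_and, mem_insert, col, not_le]
    constructor
    · rintro ⟨hk, hwk⟩
      rcases eq_or_lt_of_le hk with rfl | hlt
      · exact Or.inl rfl
      · exact Or.inr ⟨⟨hwk, hlt.trans hji⟩, hlt⟩
    · rintro (rfl | ⟨⟨hwk, _⟩, hlt⟩)
      · exact ⟨le_refl _, hij⟩
      · exact ⟨hlt.le, hwk⟩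
  have hni : i ∉ (col w j).filter (· < i) := by simp
  rw [hA, Finset.card_insert_of_notMem hni, hIic] at hsplit
  omega

lemma val_strict {n : ℕ} (w : Equiv.Perm (Fin n)) (j : Fin n) {i i' : Fin n}
    (hi : i ∈ col w j) (hi' : i' ∈ col w j) (h : i < i') :
    ((col w j).filter (· < i)).card < ((col w j).filter (· < i')).card := by
  apply Finset.card_lt_card
  constructor
  · intro k hk
    simp only [mem_filter] at hk ⊢
    exact ⟨hk.1, hk.2.trans h⟩
  · intro hsub
    have : i ∈ (col w j).filter (· < i) := hsub (by simp [mem_filter, hi, h])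
    simp at this

lemma val_lt {n : ℕ} (w : Equiv.Perm (Fin n)) (j : Fin n) {i : Fin n}
    (hi : i ∈ col w j) : ((col w j).filter (· < i)).card < mrow w⁻¹ j := by
  rw [← col_card]
  apply Finset.card_lt_card
  constructor
  · exact Finset.filter_subset _ _
  · intro hsub
    have : i ∈ (col w j).filter (· < i) := hsub hi
    simp at this

lemma mem_col_iff {n : ℕ} (w : Equiv.Perm (Fin n)) (i j : Fin n) :
    i ∈ col w j ↔ (i, j) ∈ Rothe w := by
  simp [col, Rothe]

/-- The map (i,j) ↦ (i − r_w(i,j), j) is a bijection from the Rothe diagram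
onto the top pipe dream T_w, the transpose of B_{w⁻¹}. -/
theorem stmt5 {n : ℕ} (w : Equiv.Perm (Fin n)) :
    Set.BijOn (fun p : Fin n × Fin n => ((p.1 : ℕ) - rk w p.1 p.2, (p.2 : ℕ)))
      (↑(Rothe w))
      {q : ℕ × ℕ | ∃ j : Fin n, q.2 = (j : ℕ) ∧ q.1 < mrow w⁻¹ j} := by
  have hR : ∀ p : Fin n × Fin n, p ∈ Rothe w → p.2 < w p.1 ∧ p.1 < w⁻¹ p.2 := by
    intro p hp; simpa [Rothe] using hp
  refine ⟨?_, ?_, ?_⟩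
  · intro p hp
    simp only [Finset.coe_sort_coe, Set.mem_setOf_eq]
    obtain ⟨h1, h2⟩ := hR p (by exact_mod_cast hp)
    refine ⟨p.2, rfl, ?_⟩
    rw [val_eq w p.1 p.2 h1 h2]
    exact val_lt w p.2 ((mem_col_iff w p.1 p.2).2 (by exact_mod_cast hp))
  · intro p hp p' hp' heq
    have hp : p ∈ Rothe w := by exact_mod_cast hp
    have hp' : p' ∈ Rothe w := by exact_mod_cast hp'
    obtain ⟨h1, h2⟩ := hR p hp
    obtain ⟨h1', h2'⟩ := hR p' hp'
    simp only [Prod.mk.injEq] at heq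
    have hj : p.2 = p'.2 := Fin.val_injective heq.2
    have hv : ((col w p.2).filter (· < p.1)).card = ((col w p.2).filter (· < p'.1)).card := by
      rw [← val_eq w p.1 p.2 h1 h2, heq.1, hj, val_eq w p'.1 p'.2 h1' h2']
    have hc : p.1 ∈ col w p.2 := (mem_col_iff w p.1 p.2).2 hp
    have hc' : p'.1 ∈ col w p.2 := by rw [hj]; exact (mem_col_iff w p'.1 p'.2).2 hp'
    have hi : p.1 = p'.1 := by
      rcases lt_trichotomy p.1 p'.1 with h | h | h
      · exact absurd hv (Nat.ne_of_lt (val_strict w p.2 hc hc' h))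
      · exact h
      · exact absurd hv.symm (Nat.ne_of_lt (val_strict w p.2 hc' hc h))
    exact Prod.ext hi hj
  · rintro ⟨c, jn⟩ ⟨j, hj2, hj1⟩
    simp only at hj2 hj1
    subst hj2
    have hsurj := Finset.surj_on_of_inj_on_of_card_le
      (s := col w j) (t := Finset.range (mrow w⁻¹ j))
      (fun i _ => ((col w j).filter (· < i)).card)
      (fun i hi => Finset.mem_range.2 (val_lt w j hi))
      (fun i i' hi hi' h => by
        rcases lt_trichotomy i i' with hlt | he | hlt
        · exact absurd h (Nat.ne_of_lt (val_strict w j hi hi' hlt))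
        · exact he
        · exact absurd h.symm (Nat.ne_of_lt (val_strict w j hi' hi hlt)))
      (by rw [Finset.card_range, col_card])
      c (Finset.mem_range.2 hj1)
    obtain ⟨i, hi, hic⟩ := hsurj
    have hmem : (i, j) ∈ Rothe w := (mem_col_iff w i j).1 hi
    refine ⟨(i, j), by exact_mod_cast hmem, ?_⟩
    obtain ⟨h1, h2⟩ := hR (i, j) hmem
    simp only [Prod.mk.injEq]
    exact ⟨by rw [val_eq w i j h1 h2]; exact hic.symm, trivial⟩
end

section
/- For any permutation w ∈ S_n and any antidiagonal index k, the number of cells of the bottom pipe dream B_w on the k-th antidiagonal equals the number of cells of the top pipe dream T_w on the k-th antidiagonal: #{(i,j) ∈ B_w : i+j−1 = k} = #{(i,j) ∈ T_w : i+j−1 = k}. -/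
open Finset

lemma perm_filter_card {n : ℕ} (w : Equiv.Perm (Fin n)) (P : Fin n → Prop) [DecidablePred P] :
    (Finset.univ.filter (fun j => P (w j))).card = (Finset.univ.filter P).card := by
  apply Finset.card_bij (fun j _ => w j)
  · intro a ha; simp only [mem_filter, mem_univ, true_and] at ha ⊢; exact ha
  · intro a _ b _ h; exact w.injective h
  · intro b hb
    refine ⟨w⁻¹ b, ?_, by simp⟩
    simp only [mem_filter, mem_univ, true_and] at hb ⊢
    simpa using hb

lemma mrow_add {n : ℕ} (w : Equiv.Perm (Fin n)) (i : Fin n) :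
    mrow w i + (Finset.univ.filter (fun m => m < i ∧ w m < w i)).card = (w i : ℕ) := by
  have h : (Finset.univ.filter (fun j : Fin n => w j < w i)) =
      (Finset.univ.filter (fun j => i < j ∧ w j < w i)) ∪
      (Finset.univ.filter (fun m => m < i ∧ w m < w i)) := by
    ext j
    simp only [mem_filter, mem_union, mem_univ, true_and]
    constructor
    · intro hj
      rcases lt_trichotomy i j with h' | h' | h'
      · exact Or.inl ⟨h', hj⟩
      · subst h'; exact absurd hj (lt_irrefl _)
      · exact Or.inr ⟨h', hj⟩
    · rintro (⟨_, hj⟩ | ⟨_, hj⟩) <;> exact hj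
  have hd : Disjoint (Finset.univ.filter (fun j : Fin n => i < j ∧ w j < w i))
      (Finset.univ.filter (fun m : Fin n => m < i ∧ w m < w i)) := by
    rw [Finset.disjoint_left]
    intro a ha hb
    simp only [mem_filter] at ha hb
    exact absurd (ha.2.1.trans hb.2.1) (lt_irrefl _)
  have hcard : (Finset.univ.filter (fun j : Fin n => w j < w i)).card = (w i : ℕ) := by
    have := perm_filter_card w (fun v => v < w i)
    rw [this]
    have : Finset.univ.filter (fun v : Fin n => v < w i) = Finset.Iio (w i) := by
      ext v; simp
    rw [this, Fin.card_Iio]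
  rw [h, Finset.card_union_of_disjoint hd] at hcard
  exact hcard

lemma mrow_lt {n : ℕ} (w : Equiv.Perm (Fin n)) (i : Fin n) :
    (i : ℕ) + mrow w i < n := by
  have h1 : mrow w i ≤ (Finset.Ioi i).card := by
    apply Finset.card_le_card
    intro j hj
    simp only [mem_filter, mem_univ, true_and, mem_Ioi] at hj ⊢
    exact hj.1
  rw [Fin.card_Ioi] at h1
  have := i.isLt
  omega

lemma key {n : ℕ} (w : Equiv.Perm (Fin n)) (i : Fin n) :
    (i : ℕ) + mrow w i = (w i : ℕ) + mrow w⁻¹ (w i) := by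
  have h1 := mrow_add w i
  have h2 := mrow_add w⁻¹ (w i)
  simp only [show ∀ x, w⁻¹ (w x) = x from fun x => Equiv.symm_apply_apply w x] at h2
  have h3 : (Finset.univ.filter (fun m : Fin n => m < w i ∧ w⁻¹ m < i)).card
      = (Finset.univ.filter (fun m : Fin n => m < i ∧ w m < w i)).card := by
    have h := perm_filter_card w (fun m : Fin n => m < w i ∧ w⁻¹ m < i)
    simp only [show ∀ x, w⁻¹ (w x) = x from fun x => Equiv.symm_apply_apply w x] at h
    rw [← h]
    congr 1
    ext m
    simp only [mem_filter]
    tauto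
  omega

/-- B_w and T_w have the same number of cells on each antidiagonal
(1-based antidiagonal index: i+j−1 = k becomes (i₀)+(j₀)+1 = k for 0-based coordinates). -/
theorem stmt6 {n : ℕ} (w : Equiv.Perm (Fin n)) (k : ℕ) :
    (Finset.univ.filter (fun p : Fin n × Fin n =>
        (p.2 : ℕ) < mrow w p.1 ∧ (p.1 : ℕ) + (p.2 : ℕ) + 1 = k)).card =
    (Finset.univ.filter (fun p : Fin n × Fin n =>
        (p.1 : ℕ) < mrow w⁻¹ p.2 ∧ (p.1 : ℕ) + (p.2 : ℕ) + 1 = k)).card := by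
  cases k with
  | zero =>
    rw [Finset.filter_false_of_mem (by rintro p - ⟨-, h⟩; omega),
        Finset.filter_false_of_mem (by rintro p - ⟨-, h⟩; omega)]
  | succ s =>
    have hL : (Finset.univ.filter (fun p : Fin n × Fin n =>
        (p.2 : ℕ) < mrow w p.1 ∧ (p.1 : ℕ) + (p.2 : ℕ) + 1 = s + 1)).card =
        (Finset.univ.filter (fun i : Fin n =>
          (i : ℕ) ≤ s ∧ s < (i : ℕ) + mrow w i)).card := by
      apply Finset.card_bij (fun p _ => p.1)
      · intro p hp
        simp only [mem_filter, mem_univ, true_and] at hp ⊢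
        omega
      · intro p hp q hq h
        simp only [mem_filter, mem_univ, true_and] at hp hq
        have h1 := congrArg Fin.val h
        have h2 : (p.2 : ℕ) = (q.2 : ℕ) := by omega
        exact Prod.ext h (Fin.ext h2)
      · intro i hi
        simp only [mem_filter, mem_univ, true_and] at hi
        have hm := mrow_lt w i
        refine ⟨(i, ⟨s - (i : ℕ), by omega⟩), ?_, rfl⟩
        simp only [mem_filter, mem_univ, true_and]
        constructor
        · show s - (i : ℕ) < mrow w i; omega
        · show (i : ℕ) + (s - (i : ℕ)) + 1 = s + 1; omega
    have hR : (Finset.univ.filter (fun p : Fin n × Fin n =>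
        (p.1 : ℕ) < mrow w⁻¹ p.2 ∧ (p.1 : ℕ) + (p.2 : ℕ) + 1 = s + 1)).card =
        (Finset.univ.filter (fun j : Fin n =>
          (j : ℕ) ≤ s ∧ s < (j : ℕ) + mrow w⁻¹ j)).card := by
      apply Finset.card_bij (fun p _ => p.2)
      · intro p hp
        simp only [mem_filter, mem_univ, true_and] at hp ⊢
        omega
      · intro p hp q hq h
        simp only [mem_filter, mem_univ, true_and] at hp hq
        have h1 := congrArg Fin.val h
        have h2 : (p.1 : ℕ) = (q.1 : ℕ) := by omega
        exact Prod.ext (Fin.ext h2) h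
      · intro j hj
        simp only [mem_filter, mem_univ, true_and] at hj
        have hm := mrow_lt w⁻¹ j
        refine ⟨(⟨s - (j : ℕ), by omega⟩, j), ?_, rfl⟩
        simp only [mem_filter, mem_univ, true_and]
        constructor
        · show s - (j : ℕ) < mrow w⁻¹ j; omega
        · show (s - (j : ℕ)) + (j : ℕ) + 1 = s + 1; omega
    rw [hL, hR]
    have hC : (Finset.univ.filter (fun i : Fin n => (i : ℕ) + mrow w i ≤ s)).card =
        (Finset.univ.filter (fun j : Fin n => (j : ℕ) + mrow w⁻¹ j ≤ s)).card := by
      rw [← perm_filter_card w (fun j : Fin n => (j : ℕ) + mrow w⁻¹ j ≤ s)]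
      congr 1
      ext i
      simp only [mem_filter, mem_univ, true_and]
      rw [← key w i]
    have split : ∀ (v : Equiv.Perm (Fin n)),
        (Finset.univ.filter (fun i : Fin n => (i : ℕ) ≤ s ∧ s < (i : ℕ) + mrow v i)).card
        + (Finset.univ.filter (fun i : Fin n => (i : ℕ) + mrow v i ≤ s)).card
        = (Finset.univ.filter (fun i : Fin n => (i : ℕ) ≤ s)).card := by
      intro v
      rw [← Finset.card_union_of_disjoint (by
        rw [Finset.disjoint_left]
        intro a ha hb
        simp only [mem_filter] at ha hb
        omega)]
      congr 1
      ext i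
      simp only [mem_union, mem_filter, mem_univ, true_and]
      omega
    have h1 := split w
    have h2 := split w⁻¹
    omega
end

section
/- Let w ∈ S_n, let (i,j) ∈ D(w), and let j_1 < j_2 < … < j_m enumerate {j' : (i,j') ∈ D(w)}. Then for each ℓ, j_ℓ − r_w(i, j_ℓ) = ℓ. In particular, j − r_w(i,j) = #{j' ≤ j : (i,j') ∈ D(w)}. -/
open Finset

/-- For (i,j) ∈ D(w), the column position after left-justification,
j − r_w(i,j) (1-based: (j₀+1) − r), equals the number of diagram cells
in row i with column index ≤ j; this is the content of the enumeration claim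
j_ℓ − r_w(i,j_ℓ) = ℓ. -/
theorem stmt10 {n : ℕ} (w : Equiv.Perm (Fin n)) (i j : Fin n)
    (h : (i, j) ∈ Rothe w) :
    (j : ℕ) + 1 - rk w i j =
      (Finset.univ.filter (fun j' => j' ≤ j ∧ (i, j') ∈ Rothe w)).card := by
  simp only [Rothe, mem_filter, mem_univ, true_and] at h
  obtain ⟨h1, h2⟩ := h
  have key : (Finset.univ.filter (fun j' => j' ≤ j ∧ ¬ ((i, j') ∈ Rothe w))).card
      = rk w i j := by
    unfold rk
    apply Finset.card_bij' (fun j' _ => w⁻¹ j') (fun k _ => w k)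
    · intro a ha
      simp only [Rothe, mem_filter, mem_univ, true_and, not_and, not_lt] at ha ⊢
      obtain ⟨haj, h3⟩ := ha
      exact ⟨h3 (lt_of_le_of_lt haj h1), by simpa using haj⟩
    · intro k hk
      simp only [Rothe, mem_filter, mem_univ, true_and, not_and, not_lt] at hk ⊢
      exact ⟨hk.2, fun _ => by simpa using hk.1⟩
    · intro a _; simp
    · intro k _; simp
  have hsplit : (Finset.univ.filter (fun j' => j' ≤ j ∧ (i, j') ∈ Rothe w)).card
      + (Finset.univ.filter (fun j' => j' ≤ j ∧ ¬ ((i, j') ∈ Rothe w))).card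
      = (j : ℕ) + 1 := by
    have hI : Finset.univ.filter (fun j' : Fin n => j' ≤ j) = Finset.Iic j := by
      ext x; simp
    have := Finset.card_filter_add_card_filter_not
      (s := Finset.univ.filter (fun j' : Fin n => j' ≤ j))
      (p := fun j' => (i, j') ∈ Rothe w)
    rw [Finset.filter_filter, Finset.filter_filter] at this
    rw [this, hI]
    simp [Nat.card_Iic]
  omega
end

section
/- A permutation w avoids the pattern 132 (i.e., there is no triple i < j < k with w(i) < w(k) < w(j)) if and only if r_w(i,j) = 0 for every cell (i,j) of the Rothe diagram D(w). -/
open Finset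

/-- w avoids 132 iff r_w vanishes on the Rothe diagram. -/
theorem stmt11 {n : ℕ} (w : Equiv.Perm (Fin n)) :
    (∀ i j k : Fin n, i < j → j < k → w i < w k → ¬ w k < w j) ↔
      ∀ p ∈ Rothe w, rk w p.1 p.2 = 0 := by
  constructor
  · intro h p hp
    simp only [Rothe, mem_filter, mem_univ, true_and] at hp
    obtain ⟨h1, h2⟩ := hp
    rw [rk, Finset.card_eq_zero, Finset.filter_eq_empty_iff]
    intro k _
    rintro ⟨hk1, hk2⟩
    set m := w⁻¹ p.2 with hm
    have hwm : w m = p.2 := w.apply_symm_apply p.2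
    have hkm : k ≠ m := by
      intro e; rw [e] at hk1
      exact absurd hk1 (not_le.mpr h2)
    have hki : k < p.1 := by
      rcases lt_or_eq_of_le hk1 with h | h
      · exact h
      · exfalso; rw [h] at hk2; exact absurd h1 (not_lt.mpr hk2)
    have hwk : w k < w m := by
      rw [hwm]
      rcases lt_or_eq_of_le hk2 with h | h
      · exact h
      · exact (hkm (w.injective (h.trans hwm.symm))).elim
    exact h k p.1 m hki h2 hwk (by rw [hwm]; exact h1)
  · intro h i j k hij hjk hik hkj
    have hp : (j, w k) ∈ Rothe w := by
      simp only [Rothe, mem_filter, mem_univ, true_and]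
      exact ⟨hkj, by simpa using hjk⟩
    have := h _ hp
    rw [rk, Finset.card_eq_zero, Finset.filter_eq_empty_iff] at this
    exact this (mem_univ i) ⟨hij.le, hik.le⟩
end

section
/- For any permutation w ∈ S_n, the number of 132-patterns of w equals the number of 132-patterns of w⁻¹ if one counts via the Rothe diagram: Σ_{(i,j)∈D(w)} r_w(i,j) = Σ_{(i,j)∈D(w⁻¹)} r_{w⁻¹}(i,j). -/
open Finset

lemma rk_inv {n : ℕ} (w : Equiv.Perm (Fin n)) (i j : Fin n) :
    rk w i j = rk w⁻¹ j i := by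
  unfold rk
  refine Finset.card_nbij' (fun k => w k) (fun k => w⁻¹ k) ?_ ?_ ?_ ?_
  · intro k hk
    simp only [Finset.mem_coe, Finset.mem_filter, Finset.mem_univ, true_and, Equiv.Perm.coe_inv, Equiv.symm_apply_apply] at *
    exact ⟨hk.2, hk.1⟩
  · intro k hk
    simp only [Finset.mem_coe, Finset.mem_filter, Finset.mem_univ, true_and, Equiv.Perm.coe_inv, Equiv.apply_symm_apply] at *
    exact ⟨hk.2, hk.1⟩
  · intro k _; simp
  · intro k _; simp

/-- The rank sums over the Rothe diagrams of w and w⁻¹ agree. -/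
theorem stmt15 {n : ℕ} (w : Equiv.Perm (Fin n)) :
    ∑ p ∈ Rothe w, rk w p.1 p.2 = ∑ p ∈ Rothe w⁻¹, rk w⁻¹ p.1 p.2 := by
  refine Finset.sum_nbij' (fun p => (p.2, p.1)) (fun p => (p.2, p.1)) ?_ ?_ ?_ ?_ ?_
  · intro p hp
    simp only [Rothe, Finset.mem_filter, Finset.mem_univ, true_and] at *
    exact ⟨hp.2, hp.1⟩
  · intro p hp
    simp only [Rothe, Finset.mem_filter, Finset.mem_univ, true_and] at *
    exact ⟨hp.2, hp.1⟩
  · intro p _; rfl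
  · intro p _; rfl
  · intro p _
    exact rk_inv w p.1 p.2
end

section
/- Let w ∈ S_n and (i,j) ∈ D(w). Then the number of ℓ such that (ℓ, i, w⁻¹(j)) is a 132-pattern of w is exactly r_w(i,j): #{ℓ : ℓ < i < w⁻¹(j) and w(ℓ) < j < w(i)} = r_w(i,j). -/
open Finset

/-- For (i,j) ∈ D(w), the number of ℓ such that (ℓ, i, w⁻¹(j)) is a
132-pattern of w equals r_w(i,j). -/
theorem stmt16 {n : ℕ} (w : Equiv.Perm (Fin n)) (i j : Fin n)
    (h : (i, j) ∈ Rothe w) :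
    (Finset.univ.filter
        (fun ℓ => ℓ < i ∧ i < w⁻¹ j ∧ w ℓ < j ∧ j < w i)).card = rk w i j := by
  simp only [Rothe, mem_filter, mem_univ, true_and] at h
  obtain ⟨h1, h2⟩ := h
  unfold rk
  congr 1
  apply Finset.filter_congr
  intro k _
  constructor
  · rintro ⟨hk, _, hw, _⟩
    exact ⟨hk.le, hw.le⟩
  · rintro ⟨hk, hw⟩
    refine ⟨lt_of_le_of_ne hk ?_, h2, lt_of_le_of_ne hw ?_, h1⟩
    · rintro rfl
      exact absurd hw (not_le.mpr h1)
    · intro he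
      have hkj : k = w⁻¹ j := w.injective (by simp [he])
      subst hkj
      exact absurd h2 (not_lt.mpr hk)
end

section
/- The map (i,j,k) ↦ ((j, w(k)), i) is a bijection from the set of 132-patterns of w onto the set of pairs ((a,b), ℓ) where (a,b) ∈ D(w) and ℓ ∈ {k : k ≤ a and w(k) ≤ b}. -/
open Finset

/-- The map (i,j,k) ↦ ((j, w(k)), i) is a bijection from the set of
132-patterns of w onto the pairs ((a,b), ℓ) with (a,b) ∈ D(w), ℓ ≤ a and w(ℓ) ≤ b. -/
theorem stmt17 {n : ℕ} (w : Equiv.Perm (Fin n)) :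
    Set.BijOn (fun t : Fin n × Fin n × Fin n => ((t.2.1, w t.2.2), t.1))
      (↑(P132 w))
      {x : (Fin n × Fin n) × Fin n |
        x.1 ∈ Rothe w ∧ x.2 ≤ x.1.1 ∧ w x.2 ≤ x.1.2} := by
  constructor
  · rintro ⟨i, j, k⟩ ht
    simp only [P132, Finset.coe_filter, Set.mem_setOf_eq, Finset.mem_filter] at ht
    obtain ⟨-, hij, hjk, hik, hkj⟩ := ht
    refine ⟨?_, le_of_lt hij, le_of_lt hik⟩
    simp only [Rothe, Finset.mem_filter, Finset.mem_univ, true_and]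
    exact ⟨hkj, by simpa using hjk⟩
  constructor
  · rintro ⟨i, j, k⟩ h1 ⟨i', j', k'⟩ h2 heq
    simp only [Prod.mk.injEq] at heq
    obtain ⟨⟨h3, h4⟩, h5⟩ := heq
    have : k = k' := w.injective h4
    simp [h3, h5, this]
  · rintro ⟨⟨a, b⟩, ℓ⟩ ⟨hab, hla, hwl⟩
    simp only [Rothe, Finset.mem_filter, Finset.mem_univ, true_and] at hab
    obtain ⟨hba, haw⟩ := hab
    refine ⟨(ℓ, a, w⁻¹ b), ?_, ?_⟩
    · simp only [P132, Finset.coe_filter, Set.mem_setOf_eq, Finset.mem_filter,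
        Finset.mem_univ, true_and]
      have hwb : w (w⁻¹ b) = b := Equiv.apply_symm_apply w b
      refine ⟨?_, haw, ?_, by rw [hwb]; exact hba⟩
      · rcases lt_or_eq_of_le hla with h | h
        · exact h
        · exact absurd (hwl.trans_lt (h ▸ hba)) (lt_irrefl _)
      · rw [hwb]
        rcases lt_or_eq_of_le hwl with h | h
        · exact h
        · exfalso; have : ℓ = w⁻¹ b := by apply w.injective; rw [hwb]; exact h
          exact absurd (this ▸ haw) (not_lt.mpr (this ▸ hla))
    · simp
end

section
/- For w ∈ S_n, if w has at least one 132-pattern (i.e., η_w ≥ 1), then the bottom pipe dream B_w and top pipe dream T_w are distinct as subsets of the grid. -/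
open Finset

namespace Stmt18Aux

variable {n : ℕ}

lemma card_filter_lt_strictmono (s : Finset (Fin n)) {x y : Fin n} (hx : x ∈ s) (hxy : x < y) :
    (s.filter (· < x)).card < (s.filter (· < y)).card := by
  apply Finset.card_lt_card
  constructor
  · intro z hz
    rw [Finset.mem_filter] at hz ⊢
    exact ⟨hz.1, hz.2.trans hxy⟩
  · intro hsub
    have := hsub (Finset.mem_filter.2 ⟨hx, hxy⟩)
    rw [Finset.mem_filter] at this
    exact absurd this.2 (lt_irrefl x)

lemma image_card_filter_lt (s : Finset (Fin n)) :
    s.image (fun x => (s.filter (· < x)).card) = Finset.range s.card := by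
  apply Finset.eq_of_subset_of_card_le
  · intro m hm
    simp only [Finset.mem_image] at hm
    obtain ⟨x, hx, rfl⟩ := hm
    rw [Finset.mem_range]
    apply Finset.card_lt_card
    refine ⟨Finset.filter_subset _ _, fun hsub => ?_⟩
    have := hsub hx
    rw [Finset.mem_filter] at this
    exact absurd this.2 (lt_irrefl x)
  · rw [Finset.card_range, Finset.card_image_of_injOn]
    intro x hx y hy hxy
    by_contra hne
    rcases Ne.lt_or_gt hne with hlt | hlt
    · exact absurd hxy (Nat.ne_of_lt (card_filter_lt_strictmono s hx hlt))
    · exact absurd hxy.symm (Nat.ne_of_lt (card_filter_lt_strictmono s hy hlt))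

/-- row i of the Rothe diagram. -/
def row (w : Equiv.Perm (Fin n)) (i : Fin n) : Finset (Fin n) :=
  Finset.univ.filter (fun j => (i, j) ∈ Rothe w)

lemma mem_row {w : Equiv.Perm (Fin n)} {i j : Fin n} :
    j ∈ row w i ↔ j < w i ∧ i < w⁻¹ j := by
  simp [row, Rothe]

lemma row_card (w : Equiv.Perm (Fin n)) (i : Fin n) : (row w i).card = mrow w i := by
  unfold mrow
  apply Finset.card_bij' (fun j _ => w⁻¹ j) (fun m _ => w m)
  · intro j hj
    rw [mem_row] at hj
    simp only [Finset.mem_filter, Finset.mem_univ, true_and]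
    exact ⟨hj.2, by simpa using hj.1⟩
  · intro m hm
    simp only [Finset.mem_filter, Finset.mem_univ, true_and] at hm
    rw [mem_row]
    exact ⟨hm.2, by simpa using hm.1⟩
  · intro j _; simp
  · intro m _; simp

lemma rk_eq (w : Equiv.Perm (Fin n)) {i j : Fin n} (hij : (i, j) ∈ Rothe w) :
    rk w i j = ((Finset.Iio j).filter (fun j' => w⁻¹ j' ≤ i)).card := by
  simp only [Rothe, Finset.mem_filter, Finset.mem_univ, true_and] at hij
  unfold rk
  apply Finset.card_bij' (fun k _ => w k) (fun j' _ => w⁻¹ j')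
  · intro k hk
    simp only [Finset.mem_filter, Finset.mem_univ, true_and] at hk
    simp only [Finset.mem_filter, Finset.mem_Iio]
    refine ⟨lt_of_le_of_ne hk.2 ?_, by simpa using hk.1⟩
    intro hwk
    have : k = w⁻¹ j := by rw [← hwk]; simp
    rw [this] at hk
    exact absurd hk.1 (not_le.2 hij.2)
  · intro j' hj'
    simp only [Finset.mem_filter, Finset.mem_Iio] at hj'
    simp only [Finset.mem_filter, Finset.mem_univ, true_and]
    exact ⟨hj'.2, by simpa using hj'.1.le⟩
  · intro k _; simp
  · intro j' _; simp

lemma val_sub_rk (w : Equiv.Perm (Fin n)) {i j : Fin n} (hij : (i, j) ∈ Rothe w) :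
    (j : ℕ) - rk w i j = ((row w i).filter (· < j)).card := by
  have hsplit := Finset.card_filter_add_card_filter_not
    (s := Finset.Iio j) (p := fun j' => w⁻¹ j' ≤ i)
  have hIio : (Finset.Iio j).card = (j : ℕ) := by simp
  have hrow : (Finset.Iio j).filter (fun j' => ¬ w⁻¹ j' ≤ i) = (row w i).filter (· < j) := by
    ext j'
    simp only [Finset.mem_filter, Finset.mem_Iio, mem_row, not_le]
    constructor
    · rintro ⟨h1, h2⟩
      have hjwi : j < w i := by
        simp only [Rothe, Finset.mem_filter, Finset.mem_univ, true_and] at hij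
        exact hij.1
      exact ⟨⟨h1.trans hjwi, h2⟩, h1⟩
    · rintro ⟨⟨_, h2⟩, h3⟩
      exact ⟨h3, h2⟩
  rw [rk_eq w hij, ← hrow]
  omega

lemma mem_Bimg (w : Equiv.Perm (Fin n)) {x y : ℕ} :
    (x, y) ∈ (Rothe w).image (fun p => ((p.1 : ℕ), (p.2 : ℕ) - rk w p.1 p.2)) ↔
      ∃ hx : x < n, y < mrow w ⟨x, hx⟩ := by
  constructor
  · intro hm
    rw [Finset.mem_image] at hm
    obtain ⟨⟨i, j⟩, hp, heq⟩ := hm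
    obtain ⟨hx, hy⟩ := Prod.mk.inj heq
    subst hx hy
    refine ⟨i.isLt, ?_⟩
    rw [Fin.eta, ← row_card, val_sub_rk w hp]
    have hjrow : j ∈ row w i := mem_row.2 (by
      simpa [Rothe] using hp)
    apply Finset.card_lt_card
    refine ⟨Finset.filter_subset _ _, fun hsub => ?_⟩
    have := hsub hjrow
    rw [Finset.mem_filter] at this
    exact absurd this.2 (lt_irrefl j)
  · rintro ⟨hx, hy⟩
    set i : Fin n := ⟨x, hx⟩
    rw [← row_card, ← Finset.mem_range, ← image_card_filter_lt (row w i),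
      Finset.mem_image] at hy
    obtain ⟨j, hj, hcard⟩ := hy
    rw [Finset.mem_image]
    have hp : (i, j) ∈ Rothe w := by
      rw [mem_row] at hj
      simpa [Rothe, hj.1] using hj.2
    exact ⟨(i, j), hp, by rw [val_sub_rk w hp, hcard]⟩

lemma rothe_swap (w : Equiv.Perm (Fin n)) (i j : Fin n) :
    (j, i) ∈ Rothe w⁻¹ ↔ (i, j) ∈ Rothe w := by
  simp only [Rothe, Finset.mem_filter, Finset.mem_univ, true_and, inv_inv]
  tauto

lemma rk_swap (w : Equiv.Perm (Fin n)) (i j : Fin n) : rk w⁻¹ j i = rk w i j := by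
  unfold rk
  apply Finset.card_bij' (fun k _ => w⁻¹ k) (fun m _ => w m)
  · intro k hk
    simp only [Finset.mem_filter, Finset.mem_univ, true_and] at hk ⊢
    exact ⟨hk.2, by simpa using hk.1⟩
  · intro m hm
    simp only [Finset.mem_filter, Finset.mem_univ, true_and] at hm ⊢
    exact ⟨hm.2, by simpa using hm.1⟩
  · intro k _; simp
  · intro m _; simp

lemma mem_Timg (w : Equiv.Perm (Fin n)) {x y : ℕ} :
    (x, y) ∈ (Rothe w).image (fun p => ((p.1 : ℕ) - rk w p.1 p.2, (p.2 : ℕ))) ↔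
      ∃ hy : y < n, x < mrow w⁻¹ ⟨y, hy⟩ := by
  rw [← mem_Bimg w⁻¹]
  constructor <;> intro hm <;> rw [Finset.mem_image] at hm ⊢
  · obtain ⟨⟨i, j⟩, hp, heq⟩ := hm
    obtain ⟨h1, h2⟩ := Prod.mk.inj heq
    refine ⟨(j, i), (rothe_swap w i j).2 hp, ?_⟩
    simp only [Prod.mk.injEq, rk_swap]
    exact ⟨h2, h1⟩
  · obtain ⟨⟨j, i⟩, hp, heq⟩ := hm
    obtain ⟨h1, h2⟩ := Prod.mk.inj heq
    refine ⟨(i, j), (rothe_swap w i j).1 hp, ?_⟩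
    simp only [Prod.mk.injEq, ← rk_swap w i j]
    exact ⟨h2, h1⟩

lemma mrow_lt (w : Equiv.Perm (Fin n)) {i j k : Fin n} (hij : i < j) (hjk : j < k)
    (h1 : w i < w k) (h2 : w k < w j)
    (hmax : ∀ m, i < m → m < j → ¬ w m < w i) :
    mrow w i < mrow w j := by
  apply Finset.card_lt_card
  constructor
  · intro m hm
    simp only [Finset.mem_filter, Finset.mem_univ, true_and] at hm ⊢
    obtain ⟨h3, h4⟩ := hm
    have hmj : j < m := by
      rcases lt_trichotomy m j with hlt | heq | hlt
      · exact absurd h4 (hmax m h3 hlt)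
      · subst heq; exact absurd h4 (not_lt.2 (h1.trans h2).le)
      · exact hlt
    exact ⟨hmj, h4.trans (h1.trans h2)⟩
  · intro hsub
    have hk : k ∈ Finset.univ.filter (fun m => j < m ∧ w m < w j) := by
      simp only [Finset.mem_filter, Finset.mem_univ, true_and]
      exact ⟨hjk, h2⟩
    have := hsub hk
    simp only [Finset.mem_filter, Finset.mem_univ, true_and] at this
    exact absurd this.2 (not_lt.2 h1.le)

end Stmt18Aux

open Stmt18Aux in
/-- If w contains a 132-pattern, then the bottom pipe dream B_w and
top pipe dream T_w are distinct. -/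
theorem stmt18 {n : ℕ} (w : Equiv.Perm (Fin n)) (h : (P132 w).Nonempty) :
    (Rothe w).image (fun p => ((p.1 : ℕ), (p.2 : ℕ) - rk w p.1 p.2)) ≠
      (Rothe w).image (fun p => ((p.1 : ℕ) - rk w p.1 p.2, (p.2 : ℕ))) := by
  intro heq
  obtain ⟨t, ht, hmaxt⟩ := Finset.exists_max_image (P132 w) (fun t => t.1) h
  obtain ⟨i, j, k⟩ := t
  simp only [P132, Finset.mem_filter, Finset.mem_univ, true_and] at ht
  obtain ⟨hij, hjk, h1, h2⟩ := ht
  have hmax : ∀ m, i < m → m < j → ¬ w m < w i := by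
    intro m him hmj hwm
    have hmem : (m, j, k) ∈ P132 w := by
      simp only [P132, Finset.mem_filter, Finset.mem_univ, true_and]
      exact ⟨hmj, hjk, hwm.trans h1, h2⟩
    have := hmaxt _ hmem
    exact absurd this (not_le.2 him)
  have hlt := mrow_lt w hij hjk h1 h2 hmax
  have hB : ((j : ℕ), mrow w i) ∈
      (Rothe w).image (fun p => ((p.1 : ℕ), (p.2 : ℕ) - rk w p.1 p.2)) :=
    (mem_Bimg w).2 ⟨j.isLt, by simpa using hlt⟩
  rw [heq] at hB
  obtain ⟨hc, hjc⟩ := (mem_Timg w).1 hB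
  have hT : ((i : ℕ), mrow w i) ∈
      (Rothe w).image (fun p => ((p.1 : ℕ) - rk w p.1 p.2, (p.2 : ℕ))) :=
    (mem_Timg w).2 ⟨hc, lt_trans (by exact_mod_cast hij) hjc⟩
  rw [← heq] at hT
  obtain ⟨hi, hic⟩ := (mem_Bimg w).1 hT
  simp only [Fin.eta] at hic
  exact lt_irrefl _ hic
end

section
/- For w ∈ S_n, B_w = T_w (the left-justified and top-justified pipe dreams coincide) if and only if w avoids the pattern 132. -/
open Finset

namespace Stmt19Aux

variable {n : ℕ}

lemma mem_Rothe {w : Equiv.Perm (Fin n)} {p : Fin n × Fin n} :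
    p ∈ Rothe w ↔ p.2 < w p.1 ∧ p.1 < w⁻¹ p.2 := by
  simp [Rothe]

/-- The set of columns occupied in row `i` of the Rothe diagram. -/
def rowSet (w : Equiv.Perm (Fin n)) (i : Fin n) : Finset (Fin n) :=
  Finset.univ.filter (fun j => (i, j) ∈ Rothe w)

/-- The set of rows occupied in column `j` of the Rothe diagram. -/
def colSet (w : Equiv.Perm (Fin n)) (j : Fin n) : Finset (Fin n) :=
  Finset.univ.filter (fun i => (i, j) ∈ Rothe w)

lemma rank_lt {α : Type*} [LinearOrder α] {s : Finset α} {x : α} (hx : x ∈ s) :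
    (s.filter (fun y => y < x)).card < s.card := by
  classical
  apply Finset.card_lt_card
  refine (Finset.ssubset_iff_of_subset (Finset.filter_subset _ _)).mpr ⟨x, hx, by simp⟩

lemma exists_rank {α : Type*} [LinearOrder α] (s : Finset α) {b : ℕ}
    (hb : b < s.card) : ∃ x ∈ s, (s.filter (fun y => y < x)).card = b := by
  classical
  set e := s.orderEmbOfFin rfl with he
  refine ⟨e ⟨b, hb⟩, s.orderEmbOfFin_mem rfl _, ?_⟩
  have himg : s.filter (fun y => y < e ⟨b, hb⟩)
      = (Finset.Iio (⟨b, hb⟩ : Fin s.card)).image e := by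
    ext y
    simp only [Finset.mem_filter, Finset.mem_image, Finset.mem_Iio]
    constructor
    · rintro ⟨hy, hlt⟩
      have hy' : y ∈ Set.range e := by
        rw [he, s.range_orderEmbOfFin rfl]; exact hy
      obtain ⟨m, rfl⟩ := hy'
      exact ⟨m, e.lt_iff_lt.mp hlt, rfl⟩
    · rintro ⟨m, hm, rfl⟩
      exact ⟨s.orderEmbOfFin_mem rfl m, e.strictMono hm⟩
  rw [himg, Finset.card_image_of_injective _ e.injective, Fin.card_Iio]

lemma sub_rk_row {w : Equiv.Perm (Fin n)} {i j : Fin n} (h : (i, j) ∈ Rothe w) :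
    (j : ℕ) - rk w i j = ((rowSet w i).filter (fun y => y < j)).card := by
  obtain ⟨hji, hij⟩ := mem_Rothe.mp h
  have h1 : rk w i j = (univ.filter (fun x : Fin n => x ≤ j ∧ w⁻¹ x ≤ i)).card := by
    unfold rk
    apply Finset.card_bij (fun k _ => w k)
    · intro k hk
      simp only [mem_filter, mem_univ, true_and] at hk ⊢
      exact ⟨hk.2, by simpa using hk.1⟩
    · intro a _ b _ hab; exact w.injective hab
    · intro x hx
      simp only [mem_filter, mem_univ, true_and] at hx
      exact ⟨w⁻¹ x, by simp [hx.1]; exact hx.2, by simp⟩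
  have h2 : (univ.filter (fun x : Fin n => x ≤ j)).card = (j : ℕ) + 1 := by
    have h2' : univ.filter (fun x : Fin n => x ≤ j) = Finset.Iic j := by ext x; simp
    rw [h2', Fin.card_Iic]
  have h3 : (univ.filter (fun x : Fin n => x ≤ j ∧ w⁻¹ x ≤ i)).card
      + (univ.filter (fun x : Fin n => x ≤ j ∧ ¬ w⁻¹ x ≤ i)).card = (j : ℕ) + 1 := by
    rw [← h2, ← Finset.filter_filter, ← Finset.filter_filter]
    exact Finset.card_filter_add_card_filter_not (fun x => w⁻¹ x ≤ i)
  have h4 : univ.filter (fun x : Fin n => x ≤ j ∧ ¬ w⁻¹ x ≤ i)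
      = insert j ((rowSet w i).filter (fun y => y < j)) := by
    ext x
    simp only [mem_filter, mem_univ, true_and, mem_insert, rowSet, mem_Rothe, not_le]
    constructor
    · rintro ⟨hxj, hx⟩
      rcases eq_or_lt_of_le hxj with heq | hlt
      · exact Or.inl heq
      · exact Or.inr ⟨⟨lt_trans hlt hji, hx⟩, hlt⟩
    · rintro (rfl | ⟨⟨_, hx⟩, hlt⟩)
      · exact ⟨le_refl _, hij⟩
      · exact ⟨le_of_lt hlt, hx⟩
  have h5 : j ∉ (rowSet w i).filter (fun y => y < j) := by simp
  rw [h4, Finset.card_insert_of_notMem h5] at h3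
  omega

lemma sub_rk_col {w : Equiv.Perm (Fin n)} {i j : Fin n} (h : (i, j) ∈ Rothe w) :
    (i : ℕ) - rk w i j = ((colSet w j).filter (fun y => y < i)).card := by
  obtain ⟨hji, hij⟩ := mem_Rothe.mp h
  have h2 : (univ.filter (fun k : Fin n => k ≤ i)).card = (i : ℕ) + 1 := by
    have h2' : univ.filter (fun k : Fin n => k ≤ i) = Finset.Iic i := by ext x; simp
    rw [h2', Fin.card_Iic]
  have h3 : (univ.filter (fun k : Fin n => k ≤ i ∧ w k ≤ j)).card
      + (univ.filter (fun k : Fin n => k ≤ i ∧ ¬ w k ≤ j)).card = (i : ℕ) + 1 := by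
    rw [← h2, ← Finset.filter_filter, ← Finset.filter_filter]
    exact Finset.card_filter_add_card_filter_not (fun k => w k ≤ j)
  have h4 : univ.filter (fun k : Fin n => k ≤ i ∧ ¬ w k ≤ j)
      = insert i ((colSet w j).filter (fun y => y < i)) := by
    ext x
    simp only [mem_filter, mem_univ, true_and, mem_insert, colSet, mem_Rothe, not_le]
    constructor
    · rintro ⟨hxi, hx⟩
      rcases eq_or_lt_of_le hxi with heq | hlt
      · exact Or.inl heq
      · exact Or.inr ⟨⟨hx, lt_trans hlt hij⟩, hlt⟩
    · rintro (rfl | ⟨⟨hx, _⟩, hlt⟩)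
      · exact ⟨le_refl _, hji⟩
      · exact ⟨le_of_lt hlt, hx⟩
  have h5 : i ∉ (colSet w j).filter (fun y => y < i) := by simp
  have h1 : rk w i j = (univ.filter (fun k : Fin n => k ≤ i ∧ w k ≤ j)).card := rfl
  rw [h4, Finset.card_insert_of_notMem h5] at h3
  omega

lemma mem_B {w : Equiv.Perm (Fin n)} {a b : ℕ} :
    (a, b) ∈ (Rothe w).image (fun p => ((p.1 : ℕ), (p.2 : ℕ) - rk w p.1 p.2)) ↔
      ∃ i : Fin n, (i : ℕ) = a ∧ b < (rowSet w i).card := by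
  constructor
  · intro hmem
    rw [Finset.mem_image] at hmem
    obtain ⟨p, hp, heq⟩ := hmem
    obtain ⟨ha, hb⟩ := Prod.mk.injEq _ _ _ _ ▸ heq
    refine ⟨p.1, ha, ?_⟩
    have hp2 : p.2 ∈ rowSet w p.1 := by
      simp only [rowSet, mem_filter, mem_univ, true_and]; exact hp
    rw [← hb, sub_rk_row hp]
    exact rank_lt hp2
  · rintro ⟨i, rfl, hb⟩
    obtain ⟨x, hx, hrank⟩ := exists_rank _ hb
    have hxR : (i, x) ∈ Rothe w := by
      simpa only [rowSet, mem_filter, mem_univ, true_and] using hx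
    rw [Finset.mem_image]
    refine ⟨(i, x), hxR, ?_⟩
    have := sub_rk_row hxR
    simp only [this, hrank]

lemma mem_T {w : Equiv.Perm (Fin n)} {a b : ℕ} :
    (a, b) ∈ (Rothe w).image (fun p => ((p.1 : ℕ) - rk w p.1 p.2, (p.2 : ℕ))) ↔
      ∃ j : Fin n, (j : ℕ) = b ∧ a < (colSet w j).card := by
  constructor
  · intro hmem
    rw [Finset.mem_image] at hmem
    obtain ⟨p, hp, heq⟩ := hmem
    obtain ⟨ha, hb⟩ := Prod.mk.injEq _ _ _ _ ▸ heq
    refine ⟨p.2, hb, ?_⟩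
    have hp1 : p.1 ∈ colSet w p.2 := by
      simp only [colSet, mem_filter, mem_univ, true_and]; exact hp
    rw [← ha, sub_rk_col hp]
    exact rank_lt hp1
  · rintro ⟨j, rfl, ha⟩
    obtain ⟨x, hx, hrank⟩ := exists_rank _ ha
    have hxR : (x, j) ∈ Rothe w := by
      simpa only [colSet, mem_filter, mem_univ, true_and] using hx
    rw [Finset.mem_image]
    refine ⟨(x, j), hxR, ?_⟩
    have := sub_rk_col hxR
    simp only [this, hrank]

lemma rowPrefix {w : Equiv.Perm (Fin n)}
    (hav : ∀ i j k : Fin n, i < j → j < k → w i < w k → ¬ w k < w j)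
    {i j j' : Fin n} (h : (i, j) ∈ Rothe w) (hj' : j' < j) : (i, j') ∈ Rothe w := by
  obtain ⟨hji, hij⟩ := mem_Rothe.mp h
  rw [mem_Rothe]
  refine ⟨lt_trans hj' hji, ?_⟩
  by_contra hc
  push_neg at hc
  have hne : w⁻¹ j' ≠ i := by
    intro he
    have : w i = j' := by rw [← he, Equiv.Perm.coe_inv, Equiv.apply_symm_apply]
    rw [this] at hji
    exact absurd (lt_trans hj' hji) (lt_irrefl _)
  have hlt : w⁻¹ j' < i := lt_of_le_of_ne hc hne
  have hw1 : w (w⁻¹ j') < w (w⁻¹ j) := by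
    rw [Equiv.Perm.coe_inv, Equiv.apply_symm_apply, Equiv.apply_symm_apply]; exact hj'
  have hw2 : w (w⁻¹ j) < w i := by
    rw [Equiv.Perm.coe_inv, Equiv.apply_symm_apply]; exact hji
  exact hav (w⁻¹ j') i (w⁻¹ j) hlt hij hw1 hw2

lemma colPrefix {w : Equiv.Perm (Fin n)}
    (hav : ∀ i j k : Fin n, i < j → j < k → w i < w k → ¬ w k < w j)
    {i i' j : Fin n} (h : (i, j) ∈ Rothe w) (hi' : i' < i) : (i', j) ∈ Rothe w := by
  obtain ⟨hji, hij⟩ := mem_Rothe.mp h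
  rw [mem_Rothe]
  refine ⟨?_, lt_trans hi' hij⟩
  by_contra hc
  push_neg at hc
  have hne : w i' ≠ j := by
    intro he
    have : w⁻¹ j = i' := by rw [← he, Equiv.Perm.coe_inv, Equiv.symm_apply_apply]
    rw [this] at hij
    exact absurd (lt_trans hi' hij) (lt_irrefl _)
  have hlt : w i' < j := lt_of_le_of_ne hc hne
  have hw1 : w i' < w (w⁻¹ j) := by rw [Equiv.Perm.coe_inv, Equiv.apply_symm_apply]; exact hlt
  have hw2 : w (w⁻¹ j) < w i := by rw [Equiv.Perm.coe_inv, Equiv.apply_symm_apply]; exact hji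
  exact hav i' i (w⁻¹ j) hi' hij hw1 hw2

lemma exists_adjacent (w : Equiv.Perm (Fin n)) {i j k : Fin n}
    (hij : i < j) (hjk : j < k) (h1 : w i < w k) (h2 : w k < w j) :
    ∃ a c m : Fin n, (c : ℕ) = (a : ℕ) + 1 ∧ c < m ∧ w a < w m ∧ w m < w c := by
  have main : ∀ g : ℕ, ∀ i j k : Fin n, (j : ℕ) - (i : ℕ) ≤ g → i < j → j < k →
      w i < w k → w k < w j →
      ∃ a c m : Fin n, (c : ℕ) = (a : ℕ) + 1 ∧ c < m ∧ w a < w m ∧ w m < w c := by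
    intro g
    induction g with
    | zero =>
      intro i j k hle hij _ _ _
      rw [Fin.lt_def] at hij
      omega
    | succ g ih =>
      intro i j k hle hij hjk h1 h2
      by_cases hadj : (j : ℕ) = (i : ℕ) + 1
      · exact ⟨i, j, k, hadj, hjk, h1, h2⟩
      · have hij' : (i : ℕ) + 1 < (j : ℕ) := by
          rw [Fin.lt_def] at hij; omega
        have hlt : (i : ℕ) + 1 < n := lt_trans hij' j.isLt
        set i1 : Fin n := ⟨(i : ℕ) + 1, hlt⟩ with hi1
        have hi1j : i1 < j := by rw [Fin.lt_def]; exact hij'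
        have hi1k : i1 < k := lt_trans hi1j hjk
        have hne : w i1 ≠ w k := fun he => absurd (w.injective he) (ne_of_lt hi1k)
        rcases lt_or_gt_of_ne hne with hlt2 | hgt2
        · apply ih i1 j k ?_ hi1j hjk hlt2 h2
          simp only [hi1]
          omega
        · exact ⟨i, i1, k, rfl, hi1k, h1, hgt2⟩
  exact main ((j : ℕ) - (i : ℕ)) i j k le_rfl hij hjk h1 h2

end Stmt19Aux

open Stmt19Aux in
/-- B_w = T_w if and only if w avoids the pattern 132. -/
theorem stmt19 {n : ℕ} (w : Equiv.Perm (Fin n)) :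
    (Rothe w).image (fun p => ((p.1 : ℕ), (p.2 : ℕ) - rk w p.1 p.2)) =
      (Rothe w).image (fun p => ((p.1 : ℕ) - rk w p.1 p.2, (p.2 : ℕ))) ↔
    ∀ i j k : Fin n, i < j → j < k → w i < w k → ¬ w k < w j := by
  constructor
  · -- B = T → avoidance
    intro hBT i j k hij hjk h1 h2
    obtain ⟨a, c, m, hadj, hcm, g1, g2⟩ := exists_adjacent w hij hjk h1 h2
    have hac : a < c := by rw [Fin.lt_def, hadj]; omega
    -- rows of the diagram have weakly decreasing lengths
    have anti : ∀ i i' : Fin n, i < i' → (rowSet w i').card ≤ (rowSet w i).card := by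
      intro i i' hii'
      by_contra hc
      push_neg at hc
      set b := (rowSet w i).card with hbdef
      have hbmem : ((i' : ℕ), b) ∈
          (Rothe w).image (fun p => ((p.1 : ℕ), (p.2 : ℕ) - rk w p.1 p.2)) :=
        mem_B.mpr ⟨i', rfl, hc⟩
      rw [hBT] at hbmem
      obtain ⟨jb, hjb, hi'⟩ := mem_T.mp hbmem
      have h2' : ((i : ℕ), b) ∈
          (Rothe w).image (fun p => ((p.1 : ℕ) - rk w p.1 p.2, (p.2 : ℕ))) :=
        mem_T.mpr ⟨jb, hjb, lt_trans hii' hi'⟩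
      rw [← hBT] at h2'
      obtain ⟨i0, hi0, hb0⟩ := mem_B.mp h2'
      have hi0i : i0 = i := Fin.val_injective hi0
      rw [hi0i, ← hbdef] at hb0
      exact lt_irrefl _ hb0
    -- but the 132 pattern forces row a shorter than row c
    have hwac : w a < w c := lt_trans g1 g2
    have hsub : rowSet w a ⊆ rowSet w c := by
      intro x hx
      simp only [rowSet, mem_filter, mem_univ, true_and, mem_Rothe] at hx ⊢
      obtain ⟨hx1, hx2⟩ := hx
      refine ⟨lt_trans hx1 hwac, ?_⟩
      have hne : w⁻¹ x ≠ c := by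
        intro he
        have hxc : w c = x := by rw [← he, Equiv.Perm.coe_inv, Equiv.apply_symm_apply]
        rw [hxc] at hwac
        exact absurd (lt_trans hx1 hwac) (lt_irrefl _)
      have hne' : ((w⁻¹ x : Fin n) : ℕ) ≠ (c : ℕ) := fun hv => hne (Fin.val_injective hv)
      rw [Fin.lt_def] at hx2 ⊢
      omega
    have hmem : w m ∈ rowSet w c := by
      simp only [rowSet, mem_filter, mem_univ, true_and, mem_Rothe]
      exact ⟨g2, by simpa using hcm⟩
    have hnot : w m ∉ rowSet w a := by
      simp only [rowSet, mem_filter, mem_univ, true_and, mem_Rothe]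
      rintro ⟨h', _⟩
      exact absurd g1 (not_lt.mpr (le_of_lt h'))
    have hcard : (rowSet w a).card < (rowSet w c).card :=
      Finset.card_lt_card ((Finset.ssubset_iff_of_subset hsub).mpr ⟨w m, hmem, hnot⟩)
    exact absurd hcard (not_lt.mpr (anti a c hac))
  · -- avoidance → B = T
    intro hav
    have hB : (Rothe w).image (fun p => ((p.1 : ℕ), (p.2 : ℕ) - rk w p.1 p.2))
        = (Rothe w).image (fun p => ((p.1 : ℕ), (p.2 : ℕ))) := by
      apply Finset.image_congr
      intro p hp
      have hp' : p ∈ Rothe w := hp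
      have hfil : (rowSet w p.1).filter (fun y => y < p.2) = Finset.Iio p.2 := by
        ext y
        simp only [rowSet, mem_filter, mem_univ, true_and, Finset.mem_Iio]
        exact ⟨fun ⟨_, h⟩ => h, fun h => ⟨rowPrefix hav hp' h, h⟩⟩
      have := sub_rk_row hp'
      rw [hfil, Fin.card_Iio] at this
      simp [this]
    have hT : (Rothe w).image (fun p => ((p.1 : ℕ) - rk w p.1 p.2, (p.2 : ℕ)))
        = (Rothe w).image (fun p => ((p.1 : ℕ), (p.2 : ℕ))) := by
      apply Finset.image_congr
      intro p hp
      have hp' : p ∈ Rothe w := hp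
      have hfil : (colSet w p.2).filter (fun y => y < p.1) = Finset.Iio p.1 := by
        ext y
        simp only [colSet, mem_filter, mem_univ, true_and, Finset.mem_Iio]
        exact ⟨fun ⟨_, h⟩ => h, fun h => ⟨colPrefix hav hp' h, h⟩⟩
      have := sub_rk_col hp'
      rw [hfil, Fin.card_Iio] at this
      simp [this]
    rw [hB, hT]
end
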